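/- Let w : Fin n → Fin m → ℝ be nonnegative weights. For every allocation f : Fin n → Fin m, the time-sharing utility satisfies TS(f, w) ≤ MWM(w), where MWM(w) is the maximum, over all partial matchings (sets P of user–basestation pairs in which every user appears at most once and every basestation appears at most once), of Σ_{(i,j)∈P} w i j. -/

import Mathlib

open scoped Classical

/-- Time-sharing utility of an allocation `f` of `n` users to `m` basestations with
weights `w i j`: each basestation's contribution is the sum of weights of its users
divided by its degree (empty basestations contribute `0`, via `0/0 = 0`). -/
noncomputable def TS {n m : ℕ} (f : Fin n → Fin m) (w : Fin n → Fin m → ℝ) : ℝ :=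
  ∑ j : Fin m, (∑ i ∈ Finset.univ.filter (fun i => f i = j), w i j) /
    ((Finset.univ.filter (fun i => f i = j)).card : ℝ)

/-- `P` is a partial matching: no two of its user–basestation pairs share a user or a
basestation. -/
def IsPartialMatching {n m : ℕ} (P : Finset (Fin n × Fin m)) : Prop :=
  ∀ e ∈ P, ∀ e' ∈ P, (e.1 = e'.1 ∨ e.2 = e'.2) → e = e'

/-- Maximum total weight of a partial matching in the complete bipartite graph on
`Fin n` (users) and `Fin m` (basestations) with edge weights `w`. -/
noncomputable def MWM {n m : ℕ} (w : Fin n → Fin m → ℝ) : ℝ :=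
  ((Finset.univ : Finset (Finset (Fin n × Fin m))).filter IsPartialMatching).sup'
    ⟨∅, by simp [IsPartialMatching]⟩ (fun P => ∑ e ∈ P, w e.1 e.2)

/-- for nonnegative weights, the time-sharing utility of any allocation is
at most the maximum weight of a partial matching. -/
theorem stmt6 (n m : ℕ) (w : Fin n → Fin m → ℝ) (hnn : ∀ i j, 0 ≤ w i j)
    (f : Fin n → Fin m) :
    TS f w ≤ MWM w := by
  classical
  rcases Nat.eq_zero_or_pos n with rfl | hn
  · have h1 : TS f w = 0 := by
      simp [TS]
    rw [h1, MWM]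
    refine Finset.le_sup'_of_le _ (b := (∅ : Finset (Fin 0 × Fin m)))
      (Finset.mem_filter.mpr ⟨Finset.mem_univ _, by intro e he; simp at he⟩) (by simp)
  haveI : Inhabited (Fin n) := ⟨⟨0, hn⟩⟩
  set S : Fin m → Finset (Fin n) := fun j => Finset.univ.filter (fun i => f i = j) with hS
  have hpick : ∀ j, (S j).Nonempty → ∃ i ∈ S j, ∀ i' ∈ S j, w i' j ≤ w i j :=
    fun j hj => Finset.exists_max_image (S j) (fun i => w i j) hj
  choose! g hg1 hg2 using hpick
  set T := Finset.univ.filter (fun j : Fin m => (S j).Nonempty) with hT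
  set P : Finset (Fin n × Fin m) := T.image (fun j => (g j, j)) with hP
  have hfg : ∀ j ∈ T, f (g j) = j := by
    intro j hj
    have := hg1 j (by simpa [hT] using hj)
    simpa [hS] using this
  have hPm : IsPartialMatching P := by
    intro e he e' he' hor
    simp only [hP, Finset.mem_image] at he he'
    obtain ⟨j, hj, rfl⟩ := he
    obtain ⟨j', hj', rfl⟩ := he'
    rcases hor with h | h
    · have h1 := hfg j hj
      have h2 := hfg j' hj'
      simp only at h
      rw [h] at h1
      rw [h1] at h2
      subst h2
      rw [h]
    · simp only at h
      subst h
      rfl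
  have hsum : TS f w ≤ ∑ e ∈ P, w e.1 e.2 := by
    have heq : ∑ e ∈ P, w e.1 e.2 = ∑ j ∈ T, w (g j) j := by
      rw [hP, Finset.sum_image]
      intro x _ y _ hxy
      exact (Prod.mk.injEq _ _ _ _ ▸ hxy).2
    rw [heq, TS, hT, Finset.sum_filter]
    apply Finset.sum_le_sum
    intro j _
    by_cases hj : (S j).Nonempty
    · simp only [hj, if_true]
      have hc : (0:ℝ) < (S j).card := by
        exact_mod_cast Finset.card_pos.mpr hj
      rw [div_le_iff₀ hc]
      have : ∑ i ∈ S j, w i j ≤ (S j).card • w (g j) j :=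
        Finset.sum_le_card_nsmul (S j) _ _ (fun i hi => hg2 j hj i hi)
      simpa [nsmul_eq_mul, mul_comm] using this
    · simp only [hj, if_false]
      rw [Finset.not_nonempty_iff_eq_empty] at hj
      simp [hS] at hj ⊢
      simp [hj]
  refine hsum.trans ?_
  exact Finset.le_sup' (fun Q : Finset (Fin n × Fin m) => ∑ e ∈ Q, w e.1 e.2)
    (Finset.mem_filter.mpr ⟨Finset.mem_univ _, hPm⟩)
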